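/- Let n ≥ 2, let φ be n-times continuously differentiable on an interval I, and let γ(t) = (t, t², …, t^{n-1}, φ(t)). Then det[γ′(t), γ″(t), …, γ^{(n)}(t)] = c_n · φ^{(n)}(t) for all t ∈ I, where c_n = ∏_{k=1}^{n-1} k! is a positive constant depending only on n. -/

import Mathlib

open Set

lemma pow_iteratedDerivWithin (I : Set ℝ) (hIu : UniqueDiffOn ℝ I) (m : ℕ) :
    ∀ k, ∀ t ∈ I, iteratedDerivWithin k (fun x : ℝ => x ^ m) I t
      = (m.descFactorial k : ℝ) * t ^ (m - k) := by
  intro k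
  induction k with
  | zero => intro t ht; simp
  | succ k ih =>
    intro t ht
    rw [iteratedDerivWithin_succ]
    have h1 : derivWithin (iteratedDerivWithin k (fun x : ℝ => x ^ m) I) I t
        = derivWithin (fun x => (m.descFactorial k : ℝ) * x ^ (m - k)) I t :=
      derivWithin_congr (fun x hx => ih x hx) (ih t ht)
    have h2 := ((hasDerivWithinAt_pow (m - k) t (s := I)).const_mul
      ((m.descFactorial k : ℝ))).derivWithin (hIu t ht)
    rw [h1, h2, Nat.descFactorial_succ]
    push_cast
    rw [show m - k - 1 = m - (k + 1) by omega]
    ring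

/-- for the simple curve `γ(t) = (t, t², …, t^{n-1}, φ(t))` with `φ` `n`-times
continuously differentiable on an interval `I`, one has
`det[γ'(t), …, γ^{(n)}(t)] = (∏_{k=1}^{n-1} k!) ⬝ φ^{(n)}(t)` for all `t ∈ I`. -/
theorem torsion_simple_curve (n : ℕ) (hn : 2 ≤ n) (I : Set ℝ) (hI : I.OrdConnected)
    (hIu : UniqueDiffOn ℝ I) (φ : ℝ → ℝ) (hφ : ContDiffOn ℝ n φ I)
    (γ : ℝ → Fin n → ℝ)
    (hγ : ∀ t i, γ t i = if (i : ℕ) < n - 1 then t ^ ((i : ℕ) + 1) else φ t) :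
    ∀ t ∈ I,
      Matrix.det (Matrix.of fun i j : Fin n =>
          iteratedDerivWithin ((j : ℕ) + 1) (fun s => γ s i) I t)
        = (∏ k ∈ Finset.Icc 1 (n - 1), (Nat.factorial k) : ℕ) *
            iteratedDerivWithin n φ I t := by
  intro t ht
  set M : Matrix (Fin n) (Fin n) ℝ := Matrix.of fun i j : Fin n =>
          iteratedDerivWithin ((j : ℕ) + 1) (fun s => γ s i) I t with hM
  have hpowfun : ∀ i : Fin n, (i : ℕ) < n - 1 →
      (fun s => γ s i) = fun s : ℝ => s ^ ((i : ℕ) + 1) := by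
    intro i hi
    funext s
    rw [hγ, if_pos hi]
  have hlt : M.BlockTriangular OrderDual.toDual := by
    intro i j hij
    simp only [OrderDual.toDual_lt_toDual] at hij
    have hij' : (i : ℕ) < (j : ℕ) := hij
    have hi : (i : ℕ) < n - 1 := by have := j.isLt; omega
    show iteratedDerivWithin ((j : ℕ) + 1) (fun s => γ s i) I t = 0
    rw [hpowfun i hi, pow_iteratedDerivWithin I hIu _ _ t ht,
      Nat.descFactorial_eq_zero_iff_lt.mpr (by omega)]
    simp
  rw [Matrix.det_of_lowerTriangular M hlt]
  obtain ⟨m, rfl⟩ : ∃ m, n = m + 1 := ⟨n - 1, by omega⟩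
  rw [Fin.prod_univ_castSucc]
  have hdiag : ∀ i : Fin m, M i.castSucc i.castSucc = ((i : ℕ) + 1).factorial := by
    intro i
    have hi : ((i.castSucc : Fin (m + 1)) : ℕ) < m + 1 - 1 := by
      simpa using i.isLt
    show iteratedDerivWithin (((i.castSucc : Fin (m+1)) : ℕ) + 1)
      (fun s => γ s i.castSucc) I t = _
    rw [hpowfun _ hi, pow_iteratedDerivWithin I hIu _ _ t ht]
    rw [Nat.sub_self, pow_zero, mul_one, Nat.descFactorial_self]
    simp
  have hlast : M (Fin.last m) (Fin.last m) = iteratedDerivWithin (m + 1) φ I t := by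
    have : (fun s => γ s (Fin.last m)) = φ := by
      funext s
      rw [hγ, if_neg (by simp [Fin.val_last])]
    show iteratedDerivWithin (((Fin.last m : Fin (m+1)) : ℕ) + 1)
      (fun s => γ s (Fin.last m)) I t = _
    rw [this, Fin.val_last]
  have hsf : ∀ M : ℕ, ∏ i ∈ Finset.range M, ((i + 1).factorial : ℝ) = M.superFactorial := by
    intro M
    induction M with
    | zero => simp
    | succ M ih => rw [Finset.prod_range_succ, ih, Nat.superFactorial_succ]; push_cast; ring
  rw [hlast, Finset.prod_congr rfl (fun i _ => hdiag i)]
  congr 1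
  rw [show m + 1 - 1 = m by omega]
  rw [Fin.prod_univ_eq_prod_range (fun i => (((i : ℕ) + 1).factorial : ℝ)),
    show Finset.Icc 1 m = Finset.Ico 1 (m + 1) by rfl,
    Finset.prod_Ico_eq_prod_range]
  rw [hsf]
  simp [add_comm]
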